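/- arXiv:1111.2234 — 4 statements merged into one kernel-verified Lean document; each statement's English description precedes it below -/
import Mathlib

section
/- The Perron root is log-convex in the log of the entries: if A and B are nonnegative n×n matrices, 0 ≤ α ≤ 1, and C is the matrix with entries C_{ij} = A_{ij}^α B_{ij}^{1−α} (with the convention 0^0·anything = 0 handled by requiring A_{ij}=0 iff B_{ij}=0, or simply A, B positive), then ρ(C) ≤ ρ(A)^α ρ(B)^{1−α}, where ρ denotes the spectral radius. -/
open Matrix

/-- The spectral radius of a (complexified) real matrix. -/
noncomputable def specRad {n : ℕ} (A : Matrix (Fin n) (Fin n) ℝ) : ENNReal :=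
  spectralRadius ℂ (A.map Complex.ofReal)

section Aux

attribute [local instance] Matrix.linftyOpNormedRing Matrix.linftyOpNormedAlgebra

open Finset Filter
open scoped NNReal

/-- Hölder's inequality in the product form we need. -/
lemma holder_sum {ι : Type*} (s : Finset ι) (a b : ι → ℝ) (ha : ∀ i ∈ s, 0 ≤ a i)
    (hb : ∀ i ∈ s, 0 ≤ b i) {α : ℝ} (h0 : 0 < α) (h1 : α < 1) :
    ∑ i ∈ s, a i ^ α * b i ^ (1 - α) ≤ (∑ i ∈ s, a i) ^ α * (∑ i ∈ s, b i) ^ (1 - α) := by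
  have h1' : 0 < 1 - α := by linarith
  have hpq : Real.HolderConjugate α⁻¹ (1 - α)⁻¹ := by
    rw [Real.holderConjugate_iff]
    constructor
    · rw [lt_inv_comm₀ one_pos h0]
      simpa using h1
    · rw [inv_inv, inv_inv]; ring
  have key := Real.inner_le_Lp_mul_Lq_of_nonneg s hpq
    (f := fun i => a i ^ α) (g := fun i => b i ^ (1 - α))
    (fun i hi => Real.rpow_nonneg (ha i hi) _)
    (fun i hi => Real.rpow_nonneg (hb i hi) _)
  calc ∑ i ∈ s, a i ^ α * b i ^ (1 - α)
      ≤ (∑ i ∈ s, (a i ^ α) ^ (α⁻¹)) ^ (1 / α⁻¹) *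
        (∑ i ∈ s, (b i ^ (1 - α)) ^ ((1 - α)⁻¹)) ^ (1 / (1 - α)⁻¹) := key
    _ = (∑ i ∈ s, a i) ^ α * (∑ i ∈ s, b i) ^ (1 - α) := by
        rw [one_div, one_div, inv_inv, inv_inv]
        congr 2
        · apply Finset.sum_congr rfl; intro i hi
          rw [← Real.rpow_mul (ha i hi), mul_inv_cancel₀ h0.ne', Real.rpow_one]
        · apply Finset.sum_congr rfl; intro i hi
          rw [← Real.rpow_mul (hb i hi), mul_inv_cancel₀ h1'.ne', Real.rpow_one]

lemma pow_entry_nonneg {n : ℕ} {M : Matrix (Fin n) (Fin n) ℝ} (hM : ∀ i j, 0 ≤ M i j) :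
    ∀ (k : ℕ) (i j : Fin n), 0 ≤ (M ^ k) i j := by
  intro k
  induction k with
  | zero =>
    intro i j
    rw [pow_zero]
    by_cases h : i = j <;> simp [Matrix.one_apply, h]
  | succ k ih =>
    intro i j
    rw [pow_succ, Matrix.mul_apply]
    exact Finset.sum_nonneg fun l _ => mul_nonneg (ih i l) (hM l j)

lemma pow_entry_le {n : ℕ} {A B C : Matrix (Fin n) (Fin n) ℝ} {α : ℝ}
    (h0 : 0 < α) (h1 : α < 1)
    (hA : ∀ i j, 0 ≤ A i j) (hB : ∀ i j, 0 ≤ B i j)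
    (hC : ∀ i j, C i j = A i j ^ α * B i j ^ (1 - α)) :
    ∀ (k : ℕ) (i j : Fin n), (C ^ k) i j ≤ ((A ^ k) i j) ^ α * ((B ^ k) i j) ^ (1 - α) := by
  intro k
  induction k with
  | zero =>
    intro i j
    rw [pow_zero, pow_zero, pow_zero]
    by_cases h : i = j
    · simp [Matrix.one_apply, h]
    · simp [Matrix.one_apply, h, Real.zero_rpow h0.ne',
        Real.zero_rpow (by intro hh; linarith [hh] : (1 : ℝ) - α ≠ 0)]
  | succ k ih =>
    intro i j
    rw [pow_succ, pow_succ, pow_succ, Matrix.mul_apply, Matrix.mul_apply, Matrix.mul_apply]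
    calc ∑ l, (C ^ k) i l * C l j
        ≤ ∑ l, ((A ^ k) i l * A l j) ^ α * ((B ^ k) i l * B l j) ^ (1 - α) := by
          apply Finset.sum_le_sum
          intro l _
          rw [hC l j, Real.mul_rpow (pow_entry_nonneg hA k i l) (hA l j),
            Real.mul_rpow (pow_entry_nonneg hB k i l) (hB l j)]
          calc (C ^ k) i l * (A l j ^ α * B l j ^ (1 - α))
              ≤ (((A ^ k) i l) ^ α * ((B ^ k) i l) ^ (1 - α)) *
                (A l j ^ α * B l j ^ (1 - α)) :=
                mul_le_mul_of_nonneg_right (ih i l)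
                  (mul_nonneg (Real.rpow_nonneg (hA l j) _) (Real.rpow_nonneg (hB l j) _))
            _ = ((A ^ k) i l ^ α * A l j ^ α) * ((B ^ k) i l ^ (1 - α) * B l j ^ (1 - α)) := by
                ring
      _ ≤ (∑ l, (A ^ k) i l * A l j) ^ α * (∑ l, (B ^ k) i l * B l j) ^ (1 - α) :=
          holder_sum _ _ _ (fun l _ => mul_nonneg (pow_entry_nonneg hA k i l) (hA l j))
            (fun l _ => mul_nonneg (pow_entry_nonneg hB k i l) (hB l j)) h0 h1

lemma map_ofReal_pow {n : ℕ} (M : Matrix (Fin n) (Fin n) ℝ) (k : ℕ) :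
    (M.map Complex.ofReal) ^ k = (M ^ k).map Complex.ofReal := by
  have := (map_pow (Complex.ofRealHom.mapMatrix) M k).symm
  exact this

/-- row sums bound by the `L∞`-operator norm. -/
lemma rowsum_le_nnnorm {n : ℕ} (M : Matrix (Fin n) (Fin n) ℝ) (hM : ∀ i j, 0 ≤ M i j)
    (i : Fin n) :
    ∑ j, M i j ≤ ((‖M.map Complex.ofReal‖₊ : ℝ≥0) : ℝ) := by
  rw [Matrix.linfty_opNNNorm_def]
  have hle : (∑ j, ‖(M.map Complex.ofReal) i j‖₊) ≤
      Finset.univ.sup fun i => ∑ j, ‖(M.map Complex.ofReal) i j‖₊ :=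
    Finset.le_sup (f := fun i => ∑ j, ‖(M.map Complex.ofReal) i j‖₊) (Finset.mem_univ i)
  have heq : ((∑ j, ‖(M.map Complex.ofReal) i j‖₊ : ℝ≥0) : ℝ) = ∑ j, M i j := by
    push_cast
    apply Finset.sum_congr rfl
    intro j _
    rw [Matrix.map_apply, Complex.norm_real]
    exact Real.norm_of_nonneg (hM i j)
  calc ∑ j, M i j = _ := heq.symm
    _ ≤ _ := NNReal.coe_le_coe.mpr hle

lemma lcx_nnnorm_pow_le {n : ℕ} {A B C : Matrix (Fin n) (Fin n) ℝ} {α : ℝ}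
    (h0 : 0 < α) (h1 : α < 1)
    (hA : ∀ i j, 0 ≤ A i j) (hB : ∀ i j, 0 ≤ B i j)
    (hC : ∀ i j, C i j = A i j ^ α * B i j ^ (1 - α)) (k : ℕ) :
    ‖(C.map Complex.ofReal) ^ k‖₊ ≤
      ‖(A.map Complex.ofReal) ^ k‖₊ ^ α * ‖(B.map Complex.ofReal) ^ k‖₊ ^ (1 - α) := by
  have h1' : (0 : ℝ) ≤ 1 - α := by linarith
  have hC0 : ∀ i j, 0 ≤ C i j := fun i j => by
    rw [hC i j]; exact mul_nonneg (Real.rpow_nonneg (hA i j) _) (Real.rpow_nonneg (hB i j) _)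
  rw [map_ofReal_pow, map_ofReal_pow, map_ofReal_pow]
  rw [Matrix.linfty_opNNNorm_def]
  apply Finset.sup_le
  intro i _
  rw [← NNReal.coe_le_coe]
  have heq : ((∑ j, ‖((C ^ k).map Complex.ofReal) i j‖₊ : ℝ≥0) : ℝ) = ∑ j, (C ^ k) i j := by
    push_cast
    apply Finset.sum_congr rfl
    intro j _
    rw [Matrix.map_apply, Complex.norm_real]
    exact Real.norm_of_nonneg (pow_entry_nonneg hC0 k i j)
  rw [heq]
  have step1 : ∑ j, (C ^ k) i j ≤
      (∑ j, (A ^ k) i j) ^ α * (∑ j, (B ^ k) i j) ^ (1 - α) := by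
    calc ∑ j, (C ^ k) i j ≤ ∑ j, ((A ^ k) i j) ^ α * ((B ^ k) i j) ^ (1 - α) :=
          Finset.sum_le_sum fun j _ => pow_entry_le h0 h1 hA hB hC k i j
      _ ≤ _ := holder_sum _ _ _ (fun j _ => pow_entry_nonneg hA k i j)
            (fun j _ => pow_entry_nonneg hB k i j) h0 h1
  have step2 : (∑ j, (A ^ k) i j) ^ α * (∑ j, (B ^ k) i j) ^ (1 - α) ≤
      ((‖(A ^ k).map Complex.ofReal‖₊ : ℝ≥0) : ℝ) ^ α *
        ((‖(B ^ k).map Complex.ofReal‖₊ : ℝ≥0) : ℝ) ^ (1 - α) := by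
    apply mul_le_mul
    · exact Real.rpow_le_rpow (Finset.sum_nonneg fun j _ => pow_entry_nonneg hA k i j)
        (rowsum_le_nnnorm _ (pow_entry_nonneg hA k) i) h0.le
    · exact Real.rpow_le_rpow (Finset.sum_nonneg fun j _ => pow_entry_nonneg hB k i j)
        (rowsum_le_nnnorm _ (pow_entry_nonneg hB k) i) h1'
    · exact Real.rpow_nonneg (Finset.sum_nonneg fun j _ => pow_entry_nonneg hB k i j) _
    · exact Real.rpow_nonneg (NNReal.coe_nonneg _) _
  calc ∑ j, (C ^ k) i j ≤ _ := step1
    _ ≤ _ := step2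
    _ = ((‖(A ^ k).map Complex.ofReal‖₊ ^ α * ‖(B ^ k).map Complex.ofReal‖₊ ^ (1 - α) :
          ℝ≥0) : ℝ) := by
        push_cast [NNReal.coe_rpow]
        ring

end Aux

/-- Log-convexity of the Perron root (spectral radius) in the log of the entries:
if `A`, `B` are entrywise positive and `C_{ij} = A_{ij}^α B_{ij}^{1-α}` for `α ∈ [0,1]`,
then `ρ(C) ≤ ρ(A)^α ρ(B)^{1-α}`. -/
theorem perron_root_log_convex
    (n : ℕ) (A B C : Matrix (Fin n) (Fin n) ℝ) (α : ℝ)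
    (hα0 : 0 ≤ α) (hα1 : α ≤ 1)
    (hA : ∀ i j, 0 < A i j) (hB : ∀ i j, 0 < B i j)
    (hC : ∀ i j, C i j = A i j ^ α * B i j ^ (1 - α)) :
    specRad C ≤ specRad A ^ α * specRad B ^ (1 - α) := by
  classical
  -- boundary cases
  rcases eq_or_lt_of_le hα0 with h0 | h0
  · -- α = 0 : C = B
    have hCB : C = B := by
      ext i j
      rw [hC i j, ← h0]
      simp [Real.rpow_zero, Real.rpow_one]
    subst hCB
    rw [← h0]
    simp [ENNReal.rpow_zero, ENNReal.rpow_one]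
  rcases eq_or_lt_of_le hα1 with h1 | h1
  · -- α = 1 : C = A
    have hCA : C = A := by
      ext i j
      rw [hC i j, h1]
      simp [Real.rpow_zero, Real.rpow_one]
    subst hCA
    rw [h1]
    simp [ENNReal.rpow_zero, ENNReal.rpow_one]
  -- main case 0 < α < 1
  by_cases hn : n = 0
  · subst hn
    have hspec : spectrum ℂ (C.map Complex.ofReal) = ∅ := by
      ext z
      simp only [spectrum.mem_iff, Set.mem_empty_iff_false, iff_false, not_not]
      exact isUnit_of_subsingleton _
    have : specRad C = 0 := by
      simp [specRad, spectralRadius, hspec]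
    rw [this]
    exact zero_le
  haveI : Nonempty (Fin n) := ⟨⟨0, Nat.pos_of_ne_zero hn⟩⟩
  letI : NormedRing (Matrix (Fin n) (Fin n) ℂ) := Matrix.linftyOpNormedRing
  letI : NormedAlgebra ℂ (Matrix (Fin n) (Fin n) ℂ) := Matrix.linftyOpNormedAlgebra
  have h1' : (0 : ℝ) < 1 - α := by linarith
  set a := A.map Complex.ofReal
  set b := B.map Complex.ofReal
  set c := C.map Complex.ofReal
  have gelA : Filter.Tendsto (fun k : ℕ => (‖a ^ k‖₊ : ENNReal) ^ (1 / (k : ℝ)))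
      Filter.atTop (nhds (specRad A)) :=
    spectrum.pow_nnnorm_pow_one_div_tendsto_nhds_spectralRadius a
  have gelB : Filter.Tendsto (fun k : ℕ => (‖b ^ k‖₊ : ENNReal) ^ (1 / (k : ℝ)))
      Filter.atTop (nhds (specRad B)) :=
    spectrum.pow_nnnorm_pow_one_div_tendsto_nhds_spectralRadius b
  have gelC : Filter.Tendsto (fun k : ℕ => (‖c ^ k‖₊ : ENNReal) ^ (1 / (k : ℝ)))
      Filter.atTop (nhds (specRad C)) :=
    spectrum.pow_nnnorm_pow_one_div_tendsto_nhds_spectralRadius c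
  -- pointwise bound
  have ptwise : ∀ k : ℕ, (‖c ^ k‖₊ : ENNReal) ^ (1 / (k : ℝ)) ≤
      ((‖a ^ k‖₊ : ENNReal) ^ (1 / (k : ℝ))) ^ α *
        ((‖b ^ k‖₊ : ENNReal) ^ (1 / (k : ℝ))) ^ (1 - α) := by
    intro k
    have hkey : (‖c ^ k‖₊ : ENNReal) ≤
        (‖a ^ k‖₊ : ENNReal) ^ α * (‖b ^ k‖₊ : ENNReal) ^ (1 - α) := by
      have := lcx_nnnorm_pow_le h0 h1 (fun i j => (hA i j).le) (fun i j => (hB i j).le) hC k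
      calc (‖c ^ k‖₊ : ENNReal) ≤
          ((‖a ^ k‖₊ ^ α * ‖b ^ k‖₊ ^ (1 - α) : NNReal) : ENNReal) := ENNReal.coe_le_coe.mpr this
        _ = _ := by
          rw [ENNReal.coe_mul, ENNReal.coe_rpow_of_nonneg _ h0.le,
            ENNReal.coe_rpow_of_nonneg _ h1'.le]
    have hmono := ENNReal.rpow_le_rpow hkey (by positivity : (0:ℝ) ≤ 1 / (k : ℝ))
    calc (‖c ^ k‖₊ : ENNReal) ^ (1 / (k : ℝ))
        ≤ ((‖a ^ k‖₊ : ENNReal) ^ α * (‖b ^ k‖₊ : ENNReal) ^ (1 - α)) ^ (1 / (k : ℝ)) := hmono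
      _ = _ := by
          rw [ENNReal.mul_rpow_of_nonneg _ _ (by positivity : (0:ℝ) ≤ 1 / (k : ℝ)),
            ← ENNReal.rpow_mul, ← ENNReal.rpow_mul, mul_comm α (1 / (k : ℝ)),
            mul_comm (1 - α) (1 / (k : ℝ)), ENNReal.rpow_mul, ENNReal.rpow_mul]
  -- RHS tendsto
  have tA : Filter.Tendsto (fun k : ℕ => ((‖a ^ k‖₊ : ENNReal) ^ (1 / (k : ℝ))) ^ α)
      Filter.atTop (nhds (specRad A ^ α)) :=
    (ENNReal.continuous_rpow_const.tendsto _).comp gelA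
  have tB : Filter.Tendsto (fun k : ℕ => ((‖b ^ k‖₊ : ENNReal) ^ (1 / (k : ℝ))) ^ (1 - α))
      Filter.atTop (nhds (specRad B ^ (1 - α))) :=
    (ENNReal.continuous_rpow_const.tendsto _).comp gelB
  have hAfin : specRad A ≠ ⊤ :=
    (lt_of_le_of_lt (spectrum.spectralRadius_le_nnnorm a) ENNReal.coe_lt_top).ne
  have hBfin : specRad B ≠ ⊤ :=
    (lt_of_le_of_lt (spectrum.spectralRadius_le_nnnorm b) ENNReal.coe_lt_top).ne
  have tAB : Filter.Tendsto
      (fun k : ℕ => ((‖a ^ k‖₊ : ENNReal) ^ (1 / (k : ℝ))) ^ α *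
        ((‖b ^ k‖₊ : ENNReal) ^ (1 / (k : ℝ))) ^ (1 - α))
      Filter.atTop (nhds (specRad A ^ α * specRad B ^ (1 - α))) :=
    ENNReal.Tendsto.mul tA
      (Or.inr (ENNReal.rpow_ne_top_of_nonneg h1'.le hBfin)) tB
      (Or.inr (ENNReal.rpow_ne_top_of_nonneg h0.le hAfin))
  exact le_of_tendsto_of_tendsto' gelC tAB ptwise
end

section
/- Let M have a simple eigenvalue λ with right eigenvector u and left eigenvector v, v^T u = 1, P = uv^T, S = (M−λI)^{#}. Suppose the row vector [w^T, w_{n+1}] solves the system [w^T, w_{n+1}]·[[M−λI, −u],[∇N^T, 0]] = [−∇f^T, 0], where ∇N^T u = 1. Then w^T = (−∇f^T + (∇f^T u)∇N^T) S. -/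
open Matrix

/-- If the row vector `[wᵀ, w_{n+1}]` solves the bordered system
`[wᵀ, w_{n+1}]·[[M-λI, -u],[∇Nᵀ, 0]] = [-∇fᵀ, 0]`, where `λ` is a simple eigenvalue of `M`
with eigenvectors `u`, `v`, `vᵀu = 1`, `P = uvᵀ` the spectral projector, `S = (M-λI)^#` the
group inverse and `∇Nᵀ u = 1`, then `wᵀ = (-∇fᵀ + (∇fᵀu)∇Nᵀ) S`. -/
theorem bordered_system_solution
    (n : ℕ) (M : Matrix (Fin n) (Fin n) ℝ) (lam : ℝ) (u v gf gN : Fin n → ℝ)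
    (hsimple : (Matrix.charpoly M).rootMultiplicity lam = 1)
    (hu : M.mulVec u = lam • u)
    (hv : Matrix.vecMul v M = lam • v)
    (hnorm : v ⬝ᵥ u = 1)
    (P S : Matrix (Fin n) (Fin n) ℝ)
    (hP : P = Matrix.vecMulVec u v)
    -- S is the group (Drazin) inverse of M - λI, with the spectral projector properties:
    (hS1 : S * (M - lam • 1) = 1 - P)
    (hS2 : (M - lam • 1) * S = 1 - P)
    (hS3 : S * P = 0) (hS4 : P * S = 0)
    (hgN : gN ⬝ᵥ u = 1)
    (w : Fin n → ℝ) (wlast : ℝ)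
    -- the bordered linear system, written componentwise:
    (hsys1 : Matrix.vecMul w (M - lam • 1) + wlast • gN = -gf)
    (hsys2 : w ⬝ᵥ u = 0) :
    w = Matrix.vecMul (-gf + (gf ⬝ᵥ u) • gN) S := by
  have hMu : (M - lam • 1).mulVec u = 0 := by
    simp [Matrix.sub_mulVec, hu, Matrix.smul_mulVec]
  -- determine wlast
  have hdot := congrArg (· ⬝ᵥ u) hsys1
  simp only [add_dotProduct, smul_dotProduct, hgN, smul_eq_mul, mul_one,
    neg_dotProduct] at hdot
  rw [← Matrix.dotProduct_mulVec, hMu, dotProduct_zero, zero_add] at hdot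
  -- multiply the system on the right by S
  have hmul := congrArg (fun x => Matrix.vecMul x S) hsys1
  simp only [Matrix.add_vecMul, Matrix.smul_vecMul, Matrix.vecMul_vecMul, hS2] at hmul
  have hwP : Matrix.vecMul w P = 0 := by
    ext j
    have h0 : ∑ x, w x * u x = 0 := hsys2
    simp [hP, Matrix.vecMul, Matrix.vecMulVec, dotProduct, ← mul_assoc,
      ← Finset.sum_mul, h0]
  rw [Matrix.vecMul_sub, Matrix.vecMul_one, hwP, sub_zero, hdot] at hmul
  rw [Matrix.add_vecMul, Matrix.neg_vecMul, Matrix.smul_vecMul]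
  rw [Matrix.neg_vecMul] at hmul
  linear_combination (norm := module) hmul
end

section
/- Let A be a nonnegative n×n matrix such that the directed graph with an edge (i,j) whenever A_{ij} > 0 is strongly connected, let α ∈ (1/2, 1), and define θ(p) = C(α) + (1−α)φ(p) + (1−α)φ(−p) + (2α−1)log(Σ_{i,j} A_{ij} e^{p_i − p_j}), where φ is log-sum-exp. Then the Hessian ∇²θ(p) is positive semidefinite for all p, its nullspace is exactly the one-dimensional span of the all-ones vector e, and its spectral norm satisfies ‖∇²θ(p)‖₂ ≤ 6α − 2 < 4. -/
open Matrix Finset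

/-- The dual HOTS objective. -/
noncomputable def thetaHOTS {n : ℕ} (A : Matrix (Fin n) (Fin n) ℝ) (α C : ℝ)
    (p : Fin n → ℝ) : ℝ :=
  C + (1 - α) * Real.log (∑ i, Real.exp (p i)) + (1 - α) * Real.log (∑ i, Real.exp (-p i))
    + (2 * α - 1) * Real.log (∑ i, ∑ j, A i j * Real.exp (p i - p j))

/-- The Hessian matrix of a function `f : ℝⁿ → ℝ` at `p`. -/
noncomputable def hessianMatrix {n : ℕ} (f : (Fin n → ℝ) → ℝ) (p : Fin n → ℝ) :
    Matrix (Fin n) (Fin n) ℝ :=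
  Matrix.of fun i j => iteratedFDeriv ℝ 2 f p ![Pi.single i 1, Pi.single j 1]

section covBAux

variable {ι : Type*} [Fintype ι]

/-- Covariance-type bilinear form arising in the Hessian of log-sum-exp expressions. -/
noncomputable def covB (w u v : ι → ℝ) : ℝ :=
  (∑ k, w k)⁻¹ * (∑ k, w k * u k * v k) -
    (∑ k, w k * v k) * (((∑ k, w k) ^ 2)⁻¹ * (∑ k, w k * u k))

lemma covB_varid (w u : ι → ℝ) :
    2 * ((∑ k, w k) * (∑ k, w k * u k * u k) - (∑ k, w k * u k) ^ 2)
      = ∑ k, ∑ l, w k * w l * (u k - u l) ^ 2 := by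
  have h : ∀ k : ι, ∑ l, w k * w l * (u k - u l) ^ 2
      = w k * u k * u k * (∑ l, w l) + w k * (∑ l, w l * u l * u l)
        - 2 * (w k * u k * (∑ l, w l * u l)) := by
    intro k
    simp only [Finset.mul_sum, ← Finset.sum_add_distrib, ← Finset.sum_sub_distrib]
    exact Finset.sum_congr rfl fun l _ => by ring
  rw [Finset.sum_congr rfl fun k _ => h k]
  simp only [Finset.sum_sub_distrib, Finset.sum_add_distrib, ← Finset.sum_mul, ← Finset.mul_sum]
  ring

lemma covB_all_zero {w : ι → ℝ} (hw : ∀ k, 0 ≤ w k) (h : ∑ k, w k = 0) : ∀ k, w k = 0 := by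
  intro k
  have := (Finset.sum_eq_zero_iff_of_nonneg (fun i _ => hw i)).1 h
  exact this k (Finset.mem_univ k)

lemma covB_nonneg {w : ι → ℝ} (hw : ∀ k, 0 ≤ w k) (u : ι → ℝ) : 0 ≤ covB w u u := by
  by_cases hW : (∑ k, w k) = 0
  · have hz := covB_all_zero hw hW
    have h1 : (∑ k, w k * u k * u k) = 0 := Finset.sum_eq_zero fun k _ => by rw [hz k]; ring
    have h2 : (∑ k, w k * u k) = 0 := Finset.sum_eq_zero fun k _ => by rw [hz k]; ring
    simp [covB, hW, h1, h2]
  · have hWpos : 0 < ∑ k, w k :=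
      lt_of_le_of_ne (Finset.sum_nonneg fun k _ => hw k) (Ne.symm hW)
    have hdd : 0 ≤ ∑ k, ∑ l, w k * w l * (u k - u l) ^ 2 :=
      Finset.sum_nonneg fun k _ => Finset.sum_nonneg fun l _ =>
        mul_nonneg (mul_nonneg (hw k) (hw l)) (sq_nonneg _)
    have hvar := covB_varid w u
    have hkey : 0 ≤ (∑ k, w k) * (∑ k, w k * u k * u k) - (∑ k, w k * u k) ^ 2 := by linarith
    have hexp : covB w u u = ((∑ k, w k) ^ 2)⁻¹ *
        ((∑ k, w k) * (∑ k, w k * u k * u k) - (∑ k, w k * u k) ^ 2) := by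
      unfold covB; field_simp
    rw [hexp]
    positivity

lemma covB_le {w : ι → ℝ} (hw : ∀ k, 0 ≤ w k) {u : ι → ℝ} {M : ℝ} (hM : 0 ≤ M)
    (hu : ∀ k, u k * u k ≤ M) : covB w u u ≤ M := by
  by_cases hW : (∑ k, w k) = 0
  · have hz := covB_all_zero hw hW
    have h1 : (∑ k, w k * u k * u k) = 0 := Finset.sum_eq_zero fun k _ => by rw [hz k]; ring
    have h2 : (∑ k, w k * u k) = 0 := Finset.sum_eq_zero fun k _ => by rw [hz k]; ring
    simp [covB, hW, h1, h2, hM]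
  · have hWpos : 0 < ∑ k, w k :=
      lt_of_le_of_ne (Finset.sum_nonneg fun k _ => hw k) (Ne.symm hW)
    have hsum : (∑ k, w k * u k * u k) ≤ (∑ k, w k) * M := by
      rw [Finset.sum_mul]
      refine Finset.sum_le_sum fun k _ => ?_
      rw [mul_assoc]
      exact mul_le_mul_of_nonneg_left (hu k) (hw k)
    have hsq : 0 ≤ (∑ k, w k * u k) * (((∑ k, w k) ^ 2)⁻¹ * (∑ k, w k * u k)) := by
      have : (∑ k, w k * u k) * (((∑ k, w k) ^ 2)⁻¹ * (∑ k, w k * u k))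
          = ((∑ k, w k) ^ 2)⁻¹ * (∑ k, w k * u k) ^ 2 := by ring
      rw [this]; positivity
    have h1 : (∑ k, w k)⁻¹ * (∑ k, w k * u k * u k) ≤ M := by
      rw [inv_mul_le_iff₀ hWpos]
      linarith [hsum]
    unfold covB
    linarith

lemma covB_eq_zero {w u : ι → ℝ} (hw : ∀ k, 0 ≤ w k) (h : covB w u u = 0)
    {k l : ι} (hk : 0 < w k) (hl : 0 < w l) : u k = u l := by
  have hWpos : 0 < ∑ k, w k := by
    have := Finset.single_le_sum (f := w) (fun i _ => hw i) (Finset.mem_univ k)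
    linarith
  have hexp : covB w u u = ((∑ k, w k) ^ 2)⁻¹ *
      ((∑ k, w k) * (∑ k, w k * u k * u k) - (∑ k, w k * u k) ^ 2) := by
    unfold covB; field_simp
  rw [hexp] at h
  have h2 : (∑ k, w k) * (∑ k, w k * u k * u k) - (∑ k, w k * u k) ^ 2 = 0 := by
    rcases mul_eq_zero.1 h with h' | h'
    · exact absurd h' (by positivity)
    · exact h'
  have hdd : ∑ k, ∑ l, w k * w l * (u k - u l) ^ 2 = 0 := by
    have := covB_varid w u; linarith
  have h3 : w k * w l * (u k - u l) ^ 2 = 0 := by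
    have hnn : ∀ a ∈ (Finset.univ : Finset ι), 0 ≤ ∑ b, w a * w b * (u a - u b) ^ 2 :=
      fun a _ => Finset.sum_nonneg fun b _ => mul_nonneg (mul_nonneg (hw a) (hw b)) (sq_nonneg _)
    have h4 := (Finset.sum_eq_zero_iff_of_nonneg hnn).1 hdd k (Finset.mem_univ k)
    have hnn2 : ∀ b ∈ (Finset.univ : Finset ι), 0 ≤ w k * w b * (u k - u b) ^ 2 :=
      fun b _ => mul_nonneg (mul_nonneg (hw k) (hw b)) (sq_nonneg _)
    exact (Finset.sum_eq_zero_iff_of_nonneg hnn2).1 h4 l (Finset.mem_univ l)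
  have h5 : (u k - u l) ^ 2 = 0 := by
    rcases mul_eq_zero.1 h3 with h' | h'
    · exact absurd h' (by positivity)
    · exact h'
  have := pow_eq_zero_iff (n := 2) (by norm_num) |>.1 h5
  linarith

lemma covB_const_right (w u : ι → ℝ) (c : ℝ) : covB w u (fun _ => c) = 0 := by
  by_cases hW : (∑ k, w k) = 0
  · simp [covB, hW]
  · have h1 : (∑ k, w k * u k * c) = (∑ k, w k * u k) * c := by
      rw [Finset.sum_mul]
    have h2 : (∑ k, w k * c) = (∑ k, w k) * c := by rw [Finset.sum_mul]
    unfold covB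
    rw [h1, h2]
    field_simp
    ring

end covBAux

lemma F2_expand_snd {n : ℕ} (F : ContinuousMultilinearMap ℝ (fun _ : Fin 2 => (Fin n → ℝ)) ℝ)
    (u y : Fin n → ℝ) : F ![u, y] = ∑ j, y j * F ![u, Pi.single j 1] := by
  have hupd : ∀ z : Fin n → ℝ, Function.update ![u, (0 : Fin n → ℝ)] 1 z = ![u, z] := by
    intro z; funext k; fin_cases k <;> simp [Function.update]
  have hy : y = ∑ j, y j • (Pi.single j 1 : Fin n → ℝ) := by
    funext k
    simp [Finset.sum_apply, Pi.single_apply]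
  calc F ![u, y] = F (Function.update ![u, 0] 1 y) := by rw [hupd]
    _ = F (Function.update ![u, 0] 1 (∑ j, y j • (Pi.single j 1 : Fin n → ℝ))) := by rw [← hy]
    _ = ∑ j, F (Function.update ![u, 0] 1 (y j • (Pi.single j 1 : Fin n → ℝ))) :=
        F.toMultilinearMap.map_update_sum Finset.univ 1 _ _
    _ = ∑ j, y j * F ![u, Pi.single j 1] := by
        refine Finset.sum_congr rfl fun j _ => ?_
        rw [F.map_update_smul, hupd]
        simp

lemma F2_expand_fst {n : ℕ} (F : ContinuousMultilinearMap ℝ (fun _ : Fin 2 => (Fin n → ℝ)) ℝ)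
    (y v : Fin n → ℝ) : F ![y, v] = ∑ i, y i * F ![Pi.single i 1, v] := by
  have hupd : ∀ z : Fin n → ℝ, Function.update ![(0 : Fin n → ℝ), v] 0 z = ![z, v] := by
    intro z; funext k; fin_cases k <;> simp [Function.update]
  have hy : y = ∑ j, y j • (Pi.single j 1 : Fin n → ℝ) := by
    funext k
    simp [Finset.sum_apply, Pi.single_apply]
  calc F ![y, v] = F (Function.update ![0, v] 0 y) := by rw [hupd]
    _ = F (Function.update ![0, v] 0 (∑ j, y j • (Pi.single j 1 : Fin n → ℝ))) := by rw [← hy]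
    _ = ∑ j, F (Function.update ![0, v] 0 (y j • (Pi.single j 1 : Fin n → ℝ))) :=
        F.toMultilinearMap.map_update_sum Finset.univ 0 _ _
    _ = ∑ i, y i * F ![Pi.single i 1, v] := by
        refine Finset.sum_congr rfl fun j _ => ?_
        rw [F.map_update_smul, hupd]
        simp

set_option maxHeartbeats 1000000 in
/-- For `A` nonnegative irreducible and `α ∈ (1/2, 1)`, the Hessian of the dual HOTS objective
`(thetaHOTS A α C)` is positive semidefinite, its nullspace is exactly the span of the all-ones vector, and its
spectral norm is at most `6α - 2 < 4`
(stated via the quadratic form: `yᵀ∇²(thetaHOTS A α C)(p)y ≤ (6α-2)‖y‖₂²`). -/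
theorem hots_hessian_properties
    (n : ℕ) (A : Matrix (Fin n) (Fin n) ℝ) (α C : ℝ)
    (hA : ∀ i j, 0 ≤ A i j)
    (hirr : ∀ i j : Fin n, ∃ m : ℕ, 0 < (A ^ m) i j)
    (hα1 : 1 / 2 < α) (hα2 : α < 1)
    (p : Fin n → ℝ) :
    (∀ y : Fin n → ℝ, 0 ≤ y ⬝ᵥ (hessianMatrix (thetaHOTS A α C) p).mulVec y) ∧
    (∀ y : Fin n → ℝ,
      (hessianMatrix (thetaHOTS A α C) p).mulVec y = 0 ↔ ∃ c : ℝ, y = fun _ => c) ∧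
    (∀ y : Fin n → ℝ,
      y ⬝ᵥ (hessianMatrix (thetaHOTS A α C) p).mulVec y ≤ (6 * α - 2) * (y ⬝ᵥ y)) ∧
    6 * α - 2 < 4 := by
  have hα3 : (0:ℝ) < 1 - α := by linarith
  have hα4 : (0:ℝ) < 2 * α - 1 := by linarith
  rcases Nat.eq_zero_or_pos n with rfl | hn
  · refine ⟨fun y => ?_, fun y => ⟨fun _ => ⟨0, funext fun i => i.elim0⟩,
      fun _ => funext fun i => i.elim0⟩, fun y => ?_, by linarith⟩
    · simp [dotProduct]
    · simp [dotProduct]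
  haveI : Nonempty (Fin n) := ⟨⟨0, hn⟩⟩
  -- the alternative: either `A = 0` or the partition-like sum is everywhere positive
  have hcase : (∀ i j, A i j = 0) ∨
      (∀ q : Fin n → ℝ, 0 < ∑ i, ∑ j, A i j * Real.exp (q i - q j)) := by
    by_cases h0 : ∀ i j, A i j = 0
    · exact Or.inl h0
    · right
      push_neg at h0
      obtain ⟨i0, j0, hij⟩ := h0
      have hpos : 0 < A i0 j0 := lt_of_le_of_ne (hA i0 j0) (Ne.symm hij)
      intro q
      have hnn : ∀ i ∈ Finset.univ, (0:ℝ) ≤ ∑ j, A i j * Real.exp (q i - q j) := fun i _ =>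
        Finset.sum_nonneg fun j _ => mul_nonneg (hA i j) (Real.exp_pos _).le
      calc (0:ℝ) < A i0 j0 * Real.exp (q i0 - q j0) := mul_pos hpos (Real.exp_pos _)
        _ ≤ ∑ j, A i0 j * Real.exp (q i0 - q j) :=
            Finset.single_le_sum (f := fun j => A i0 j * Real.exp (q i0 - q j))
              (fun j _ => mul_nonneg (hA i0 j) (Real.exp_pos _).le) (Finset.mem_univ j0)
        _ ≤ ∑ i, ∑ j, A i j * Real.exp (q i - q j) :=
            Finset.single_le_sum hnn (Finset.mem_univ i0)
  have hE1 : ∀ q : Fin n → ℝ, (0:ℝ) < ∑ i, Real.exp (q i) := fun q =>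
    Finset.sum_pos (fun i _ => Real.exp_pos _) Finset.univ_nonempty
  have hE2 : ∀ q : Fin n → ℝ, (0:ℝ) < ∑ i, Real.exp (-q i) := fun q =>
    Finset.sum_pos (fun i _ => Real.exp_pos _) Finset.univ_nonempty
  -- first derivative
  have hfd : ∀ (q v : Fin n → ℝ), fderiv ℝ (thetaHOTS A α C) q v =
      (1 - α) * ((∑ i, Real.exp (q i))⁻¹ * ∑ i, Real.exp (q i) * v i)
      + -((1 - α) * ((∑ i, Real.exp (-q i))⁻¹ * ∑ i, Real.exp (-q i) * v i))
      + (2 * α - 1) * ((∑ i, ∑ j, A i j * Real.exp (q i - q j))⁻¹ *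
          ∑ i, ∑ j, A i j * (Real.exp (q i - q j) * (v i - v j))) := by
    intro q v
    have h1 : HasFDerivAt (fun q : Fin n → ℝ => Real.log (∑ i, Real.exp (q i)))
        ((∑ i, Real.exp (q i))⁻¹ • ∑ i, Real.exp (q i) •
          ContinuousLinearMap.proj (R := ℝ) (φ := fun _ : Fin n => ℝ) i) q :=
      (Real.hasDerivAt_log (hE1 q).ne').comp_hasFDerivAt (f := fun q : Fin n → ℝ => ∑ i, Real.exp (q i)) q
        (HasFDerivAt.fun_sum fun i _ =>
          (Real.hasDerivAt_exp (q i)).comp_hasFDerivAt (f := fun q : Fin n → ℝ => q i) q (hasFDerivAt_apply i q))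
    have h2 : HasFDerivAt (fun q : Fin n → ℝ => Real.log (∑ i, Real.exp (-q i)))
        ((∑ i, Real.exp (-q i))⁻¹ • ∑ i, Real.exp (-q i) •
          (-ContinuousLinearMap.proj (R := ℝ) (φ := fun _ : Fin n => ℝ) i)) q :=
      (Real.hasDerivAt_log (hE2 q).ne').comp_hasFDerivAt (f := fun q : Fin n → ℝ => ∑ i, Real.exp (-q i)) q
        (HasFDerivAt.fun_sum fun i _ =>
          (Real.hasDerivAt_exp (-q i)).comp_hasFDerivAt (f := fun q : Fin n → ℝ => -q i) q (hasFDerivAt_apply i q).neg)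
    rcases hcase with hz | hS
    · have h3 : HasFDerivAt
          (fun q : Fin n → ℝ =>
            (2 * α - 1) * Real.log (∑ i, ∑ j, A i j * Real.exp (q i - q j)))
          (0 : (Fin n → ℝ) →L[ℝ] ℝ) q :=
        (hasFDerivAt_const ((2 * α - 1) * Real.log 0) q).congr_of_eventuallyEq
          (Filter.Eventually.of_forall fun r => by simp [hz])
      have htheta : HasFDerivAt (thetaHOTS A α C) _ q :=
        (((h1.const_mul (1 - α)).const_add C).add (h2.const_mul (1 - α))).add h3
      rw [htheta.fderiv]
      simp only [hz, zero_mul, Finset.sum_const_zero, _root_.inv_zero, mul_zero, add_zero,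
        smul_neg, sum_neg_distrib, ContinuousLinearMap.add_apply,
        ContinuousLinearMap.coe_smul', ContinuousLinearMap.coe_sum', Pi.smul_apply,
        Finset.sum_apply, ContinuousLinearMap.proj_apply, smul_eq_mul,
        ContinuousLinearMap.neg_apply, ContinuousLinearMap.zero_apply]
    · have h3 : HasFDerivAt
          (fun q : Fin n → ℝ => Real.log (∑ i, ∑ j, A i j * Real.exp (q i - q j)))
          ((∑ i, ∑ j, A i j * Real.exp (q i - q j))⁻¹ •
            ∑ i, ∑ j, A i j • (Real.exp (q i - q j) •
              (ContinuousLinearMap.proj (R := ℝ) (φ := fun _ : Fin n => ℝ) i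
                - ContinuousLinearMap.proj (R := ℝ) (φ := fun _ : Fin n => ℝ) j))) q :=
        (Real.hasDerivAt_log (hS q).ne').comp_hasFDerivAt (f := fun q : Fin n → ℝ => ∑ i, ∑ j, A i j * Real.exp (q i - q j)) q
          (HasFDerivAt.fun_sum fun i _ => HasFDerivAt.fun_sum fun j _ =>
            ((Real.hasDerivAt_exp (q i - q j)).comp_hasFDerivAt (f := fun q : Fin n → ℝ => q i - q j) q
              ((hasFDerivAt_apply i q).sub (hasFDerivAt_apply j q))).const_mul (A i j))
      have htheta : HasFDerivAt (thetaHOTS A α C) _ q :=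
        (((h1.const_mul (1 - α)).const_add C).add (h2.const_mul (1 - α))).add
          (h3.const_mul (2 * α - 1))
      rw [htheta.fderiv]
      simp only [smul_neg, sum_neg_distrib, ContinuousLinearMap.add_apply,
        ContinuousLinearMap.coe_smul', ContinuousLinearMap.coe_sum', Pi.smul_apply,
        Finset.sum_apply, ContinuousLinearMap.proj_apply, smul_eq_mul,
        ContinuousLinearMap.neg_apply, ContinuousLinearMap.coe_sub', Pi.sub_apply]
  -- smoothness, to move the second derivative inside
  have hCD : DifferentiableAt ℝ (fderiv ℝ (thetaHOTS A α C)) p := by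
    have hcd1 : ContDiff ℝ 2 (fun q : Fin n → ℝ => ∑ i, Real.exp (q i)) :=
      ContDiff.sum fun i _ => by fun_prop
    have hcd2 : ContDiff ℝ 2 (fun q : Fin n → ℝ => ∑ i, Real.exp (-q i)) :=
      ContDiff.sum fun i _ => by fun_prop
    have hlog1 : ContDiffAt ℝ 2 (fun q : Fin n → ℝ => Real.log (∑ i, Real.exp (q i))) p :=
      by have := (Real.contDiffAt_log.2 (hE1 p).ne').comp p hcd1.contDiffAt; exact this
    have hlog2 : ContDiffAt ℝ 2 (fun q : Fin n → ℝ => Real.log (∑ i, Real.exp (-q i))) p :=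
      by have := (Real.contDiffAt_log.2 (hE2 p).ne').comp p hcd2.contDiffAt; exact this
    have hlog3 : ContDiffAt ℝ 2
        (fun q : Fin n → ℝ => Real.log (∑ i, ∑ j, A i j * Real.exp (q i - q j))) p := by
      rcases hcase with hz | hS
      · exact (contDiffAt_const (c := (0:ℝ))).congr_of_eventuallyEq
          (Filter.Eventually.of_forall fun r => by simp [hz])
      · have hcd3 : ContDiff ℝ 2
            (fun q : Fin n → ℝ => ∑ i, ∑ j, A i j * Real.exp (q i - q j)) :=
          ContDiff.sum fun i _ => ContDiff.sum fun j _ => by fun_prop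
        exact (Real.contDiffAt_log.2 (hS p).ne').comp p hcd3.contDiffAt
    have hthetaCD : ContDiffAt ℝ 2 (thetaHOTS A α C) p :=
      ((contDiffAt_const.add (contDiffAt_const.mul hlog1)).add
        (contDiffAt_const.mul hlog2)).add (contDiffAt_const.mul hlog3)
    exact (hthetaCD.fderiv_right (m := 1) (by norm_num)).differentiableAt (by norm_num)
  -- the second derivative as a covariance form
  have key : ∀ u v : Fin n → ℝ, iteratedFDeriv ℝ 2 (thetaHOTS A α C) p ![u, v] =
      (1 - α) * covB (fun k => Real.exp (p k)) u v
      + (1 - α) * covB (fun k => Real.exp (-p k)) u v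
      + (2 * α - 1) * covB (fun k : Fin n × Fin n => A k.1 k.2 * Real.exp (p k.1 - p k.2))
          (fun k => u k.1 - u k.2) (fun k => v k.1 - v k.2) := by
    intro u v
    rw [iteratedFDeriv_two_apply]
    simp only [Matrix.cons_val_zero, Matrix.cons_val_one, Matrix.head_cons]
    have hswap : fderiv ℝ (fderiv ℝ (thetaHOTS A α C)) p u v = fderiv ℝ (fun q => fderiv ℝ (thetaHOTS A α C) q v) p u := by
      rw [fderiv_clm_apply hCD (differentiableAt_const v)]
      simp
    rw [hswap, show (fun q => fderiv ℝ (thetaHOTS A α C) q v) = (fun q : Fin n → ℝ =>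
      (1 - α) * ((∑ i, Real.exp (q i))⁻¹ * ∑ i, Real.exp (q i) * v i)
      + -((1 - α) * ((∑ i, Real.exp (-q i))⁻¹ * ∑ i, Real.exp (-q i) * v i))
      + (2 * α - 1) * ((∑ i, ∑ j, A i j * Real.exp (q i - q j))⁻¹ *
          ∑ i, ∑ j, A i j * (Real.exp (q i - q j) * (v i - v j))))
      from funext fun q => hfd q v]
    have hsum1 : HasFDerivAt (fun q : Fin n → ℝ => ∑ i, Real.exp (q i))
        (∑ i, Real.exp (p i) • ContinuousLinearMap.proj (R := ℝ) (φ := fun _ : Fin n => ℝ) i)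
        p :=
      HasFDerivAt.fun_sum fun i _ =>
        (Real.hasDerivAt_exp (p i)).comp_hasFDerivAt (f := fun q : Fin n → ℝ => q i) p (hasFDerivAt_apply i p)
    have hsum2 : HasFDerivAt (fun q : Fin n → ℝ => ∑ i, Real.exp (-q i))
        (∑ i, Real.exp (-p i) •
          (-ContinuousLinearMap.proj (R := ℝ) (φ := fun _ : Fin n => ℝ) i)) p :=
      HasFDerivAt.fun_sum fun i _ =>
        (Real.hasDerivAt_exp (-p i)).comp_hasFDerivAt (f := fun q : Fin n → ℝ => -q i) p (hasFDerivAt_apply i p).neg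
    have hinv1 : HasFDerivAt (fun q : Fin n → ℝ => (∑ i, Real.exp (q i))⁻¹)
        ((-((∑ i, Real.exp (p i)) ^ 2)⁻¹) • ∑ i, Real.exp (p i) •
          ContinuousLinearMap.proj (R := ℝ) (φ := fun _ : Fin n => ℝ) i) p :=
      (hasDerivAt_inv (hE1 p).ne').comp_hasFDerivAt (f := fun q : Fin n → ℝ => ∑ i, Real.exp (q i)) p hsum1
    have hinv2 : HasFDerivAt (fun q : Fin n → ℝ => (∑ i, Real.exp (-q i))⁻¹)
        ((-((∑ i, Real.exp (-p i)) ^ 2)⁻¹) • ∑ i, Real.exp (-p i) •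
          (-ContinuousLinearMap.proj (R := ℝ) (φ := fun _ : Fin n => ℝ) i)) p :=
      (hasDerivAt_inv (hE2 p).ne').comp_hasFDerivAt (f := fun q : Fin n → ℝ => ∑ i, Real.exp (-q i)) p hsum2
    have hN1 : HasFDerivAt (fun q : Fin n → ℝ => ∑ i, Real.exp (q i) * v i)
        (∑ i, v i • (Real.exp (p i) •
          ContinuousLinearMap.proj (R := ℝ) (φ := fun _ : Fin n => ℝ) i)) p :=
      HasFDerivAt.fun_sum fun i _ =>
        ((Real.hasDerivAt_exp (p i)).comp_hasFDerivAt (f := fun q : Fin n → ℝ => q i) p (hasFDerivAt_apply i p)).mul_const (v i)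
    have hN2 : HasFDerivAt (fun q : Fin n → ℝ => ∑ i, Real.exp (-q i) * v i)
        (∑ i, v i • (Real.exp (-p i) •
          (-ContinuousLinearMap.proj (R := ℝ) (φ := fun _ : Fin n => ℝ) i))) p :=
      HasFDerivAt.fun_sum fun i _ =>
        ((Real.hasDerivAt_exp (-p i)).comp_hasFDerivAt (f := fun q : Fin n → ℝ => -q i) p
          (hasFDerivAt_apply i p).neg).mul_const (v i)
    have c1 : (∑ x, v x * (Real.exp (p x) * u x)) = ∑ x, Real.exp (p x) * u x * v x :=
      Finset.sum_congr rfl fun x _ => by ring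
    have c2 : (∑ x, v x * (Real.exp (-p x) * u x)) = ∑ x, Real.exp (-p x) * u x * v x :=
      Finset.sum_congr rfl fun x _ => by ring
    rcases hcase with hz | hS
    · have hT3 : HasFDerivAt (fun q : Fin n → ℝ =>
          (2 * α - 1) * ((∑ i, ∑ j, A i j * Real.exp (q i - q j))⁻¹ *
            ∑ i, ∑ j, A i j * (Real.exp (q i - q j) * (v i - v j))))
          (0 : (Fin n → ℝ) →L[ℝ] ℝ) p :=
        (hasFDerivAt_const (0:ℝ) p).congr_of_eventuallyEq
          (Filter.Eventually.of_forall fun r => by simp [hz])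
      have hD : HasFDerivAt (fun q : Fin n → ℝ =>
          (1 - α) * ((∑ i, Real.exp (q i))⁻¹ * ∑ i, Real.exp (q i) * v i)
          + -((1 - α) * ((∑ i, Real.exp (-q i))⁻¹ * ∑ i, Real.exp (-q i) * v i))
          + (2 * α - 1) * ((∑ i, ∑ j, A i j * Real.exp (q i - q j))⁻¹ *
              ∑ i, ∑ j, A i j * (Real.exp (q i - q j) * (v i - v j)))) _ p :=
        (((hinv1.mul hN1).const_mul (1 - α)).add
          ((hinv2.mul hN2).const_mul (1 - α)).neg).add hT3
      rw [hD.fderiv]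
      simp only [covB, hz, zero_mul, Finset.sum_const_zero, _root_.inv_zero, mul_zero, zero_sub,
        neg_zero, add_zero, smul_neg, sum_neg_distrib, ContinuousLinearMap.add_apply,
        ContinuousLinearMap.coe_smul', ContinuousLinearMap.coe_sum', Pi.smul_apply,
        Finset.sum_apply, ContinuousLinearMap.proj_apply, smul_eq_mul,
        ContinuousLinearMap.neg_apply, ContinuousLinearMap.zero_apply, sub_zero,
        neg_mul, mul_neg, neg_neg]
      rw [c1, c2]
      ring
    · have hsumS : HasFDerivAt
          (fun q : Fin n → ℝ => ∑ i, ∑ j, A i j * Real.exp (q i - q j))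
          (∑ i, ∑ j, A i j • (Real.exp (p i - p j) •
            (ContinuousLinearMap.proj (R := ℝ) (φ := fun _ : Fin n => ℝ) i
              - ContinuousLinearMap.proj (R := ℝ) (φ := fun _ : Fin n => ℝ) j))) p :=
        HasFDerivAt.fun_sum fun i _ => HasFDerivAt.fun_sum fun j _ =>
          ((Real.hasDerivAt_exp (p i - p j)).comp_hasFDerivAt (f := fun q : Fin n → ℝ => q i - q j) p
            ((hasFDerivAt_apply i p).sub (hasFDerivAt_apply j p))).const_mul (A i j)
      have hinvS : HasFDerivAt
          (fun q : Fin n → ℝ => (∑ i, ∑ j, A i j * Real.exp (q i - q j))⁻¹)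
          ((-((∑ i, ∑ j, A i j * Real.exp (p i - p j)) ^ 2)⁻¹) •
            ∑ i, ∑ j, A i j • (Real.exp (p i - p j) •
              (ContinuousLinearMap.proj (R := ℝ) (φ := fun _ : Fin n => ℝ) i
                - ContinuousLinearMap.proj (R := ℝ) (φ := fun _ : Fin n => ℝ) j))) p :=
        (hasDerivAt_inv (hS p).ne').comp_hasFDerivAt (f := fun q : Fin n → ℝ => ∑ i, ∑ j, A i j * Real.exp (q i - q j)) p hsumS
      have hN3 : HasFDerivAt
          (fun q : Fin n → ℝ => ∑ i, ∑ j, A i j * (Real.exp (q i - q j) * (v i - v j)))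
          (∑ i, ∑ j, A i j • ((v i - v j) • (Real.exp (p i - p j) •
            (ContinuousLinearMap.proj (R := ℝ) (φ := fun _ : Fin n => ℝ) i
              - ContinuousLinearMap.proj (R := ℝ) (φ := fun _ : Fin n => ℝ) j)))) p :=
        HasFDerivAt.fun_sum fun i _ => HasFDerivAt.fun_sum fun j _ =>
          (((Real.hasDerivAt_exp (p i - p j)).comp_hasFDerivAt (f := fun q : Fin n → ℝ => q i - q j) p
            ((hasFDerivAt_apply i p).sub (hasFDerivAt_apply j p))).mul_const
              (v i - v j)).const_mul (A i j)
      have hD : HasFDerivAt (fun q : Fin n → ℝ =>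
          (1 - α) * ((∑ i, Real.exp (q i))⁻¹ * ∑ i, Real.exp (q i) * v i)
          + -((1 - α) * ((∑ i, Real.exp (-q i))⁻¹ * ∑ i, Real.exp (-q i) * v i))
          + (2 * α - 1) * ((∑ i, ∑ j, A i j * Real.exp (q i - q j))⁻¹ *
              ∑ i, ∑ j, A i j * (Real.exp (q i - q j) * (v i - v j)))) _ p :=
        (((hinv1.mul hN1).const_mul (1 - α)).add
          ((hinv2.mul hN2).const_mul (1 - α)).neg).add
            ((hinvS.mul hN3).const_mul (2 * α - 1))
      rw [hD.fderiv]
      simp only [covB, Fintype.sum_prod_type, smul_neg, sum_neg_distrib,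
        ContinuousLinearMap.add_apply, ContinuousLinearMap.coe_smul',
        ContinuousLinearMap.coe_sum', Pi.smul_apply, Finset.sum_apply,
        ContinuousLinearMap.proj_apply, smul_eq_mul, ContinuousLinearMap.neg_apply,
        ContinuousLinearMap.coe_sub', Pi.sub_apply, neg_mul, mul_neg, neg_neg]
      have c3 : (∑ x, ∑ y, A x y * ((v x - v y) * (Real.exp (p x - p y) * (u x - u y))))
          = ∑ x, ∑ y, A x y * Real.exp (p x - p y) * (u x - u y) * (v x - v y) :=
        Finset.sum_congr rfl fun x _ => Finset.sum_congr rfl fun y _ => by ring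
      have c4 : (∑ x, ∑ y, A x y * (Real.exp (p x - p y) * (v x - v y)))
          = ∑ x, ∑ y, A x y * Real.exp (p x - p y) * (v x - v y) :=
        Finset.sum_congr rfl fun x _ => Finset.sum_congr rfl fun y _ => by ring
      have c5 : (∑ x, ∑ y, A x y * (Real.exp (p x - p y) * (u x - u y)))
          = ∑ x, ∑ y, A x y * Real.exp (p x - p y) * (u x - u y) :=
        Finset.sum_congr rfl fun x _ => Finset.sum_congr rfl fun y _ => by ring
      rw [c1, c2, c3, c4, c5]
      ring
  -- reduction of matrix statements to the multilinear map
  have hmulV : ∀ (y : Fin n → ℝ) (i : Fin n), (hessianMatrix (thetaHOTS A α C) p).mulVec y i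
      = iteratedFDeriv ℝ 2 (thetaHOTS A α C) p ![Pi.single i 1, y] := by
    intro y i
    have h1 : (hessianMatrix (thetaHOTS A α C) p).mulVec y i
        = ∑ j, iteratedFDeriv ℝ 2 (thetaHOTS A α C) p ![Pi.single i 1, Pi.single j 1] * y j := by
      simp [Matrix.mulVec, dotProduct, hessianMatrix]
    rw [h1, F2_expand_snd (iteratedFDeriv ℝ 2 (thetaHOTS A α C) p) (Pi.single i 1) y]
    exact Finset.sum_congr rfl fun j _ => mul_comm _ _
  have hquad : ∀ y : Fin n → ℝ, y ⬝ᵥ (hessianMatrix (thetaHOTS A α C) p).mulVec y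
      = iteratedFDeriv ℝ 2 (thetaHOTS A α C) p ![y, y] := by
    intro y
    rw [F2_expand_fst (iteratedFDeriv ℝ 2 (thetaHOTS A α C) p) y y]
    exact Finset.sum_congr rfl fun i _ => by rw [hmulV]
  have hw1 : ∀ k : Fin n, (0:ℝ) ≤ Real.exp (p k) := fun k => (Real.exp_pos _).le
  have hw2 : ∀ k : Fin n, (0:ℝ) ≤ Real.exp (-p k) := fun k => (Real.exp_pos _).le
  have hw3 : ∀ k : Fin n × Fin n, (0:ℝ) ≤ A k.1 k.2 * Real.exp (p k.1 - p k.2) :=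
    fun k => mul_nonneg (hA _ _) (Real.exp_pos _).le
  refine ⟨?_, ?_, ?_, by linarith⟩
  · intro y
    rw [hquad, key]
    exact add_nonneg (add_nonneg (mul_nonneg hα3.le (covB_nonneg hw1 y))
      (mul_nonneg hα3.le (covB_nonneg hw2 y))) (mul_nonneg hα4.le (covB_nonneg hw3 _))
  · intro y
    constructor
    · intro h
      have hq : iteratedFDeriv ℝ 2 (thetaHOTS A α C) p ![y, y] = 0 := by
        rw [← hquad, h, dotProduct_zero]
      rw [key] at hq
      have hc1n := covB_nonneg hw1 y
      have hc2n := covB_nonneg hw2 y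
      have hc3n := covB_nonneg hw3 (fun k : Fin n × Fin n => y k.1 - y k.2)
      have hc1 : covB (fun k : Fin n => Real.exp (p k)) y y = 0 := by nlinarith
      refine ⟨y ⟨0, hn⟩, funext fun i => ?_⟩
      exact covB_eq_zero hw1 hc1 (Real.exp_pos _) (Real.exp_pos _)
    · rintro ⟨c, rfl⟩
      funext i
      show (hessianMatrix (thetaHOTS A α C) p).mulVec (fun _ => c) i = 0
      rw [hmulV, key]
      rw [covB_const_right, covB_const_right, covB_const_right]
      ring
  · intro y
    rw [hquad, key]
    have hM0 : (0:ℝ) ≤ ∑ i, y i * y i := Finset.sum_nonneg fun i _ => mul_self_nonneg _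
    have hyM : ∀ i, y i * y i ≤ ∑ i, y i * y i :=
      fun i => Finset.single_le_sum (f := fun i => y i * y i)
        (fun i _ => mul_self_nonneg _) (Finset.mem_univ i)
    have b1 : covB (fun k : Fin n => Real.exp (p k)) y y ≤ ∑ i, y i * y i :=
      covB_le hw1 hM0 hyM
    have b2 : covB (fun k : Fin n => Real.exp (-p k)) y y ≤ ∑ i, y i * y i :=
      covB_le hw2 hM0 hyM
    have b3 : covB (fun k : Fin n × Fin n => A k.1 k.2 * Real.exp (p k.1 - p k.2))
        (fun k => y k.1 - y k.2) (fun k => y k.1 - y k.2) ≤ 4 * ∑ i, y i * y i :=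
      covB_le hw3 (by linarith) (fun k => by
        have h1 := hyM k.1
        have h2 := hyM k.2
        nlinarith)
    have hdot : y ⬝ᵥ y = ∑ i, y i * y i := rfl
    rw [hdot]
    have hb1 := mul_le_mul_of_nonneg_left b1 hα3.le
    have hb2 := mul_le_mul_of_nonneg_left b2 hα3.le
    have hb3 := mul_le_mul_of_nonneg_left b3 hα4.le
    have hring : (1 - α) * (∑ i, y i * y i) + (1 - α) * (∑ i, y i * y i)
        + (2 * α - 1) * (4 * ∑ i, y i * y i) = (6 * α - 2) * ∑ i, y i * y i := by ring
    linarith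
end

section
/- Local error bound for eigenvector iterations (specialization of Proposition 25 / Theorem 16 of Mayer adapted here): Let M ∈ ℝ^{n×n}, p ∈ ℝ^n, ũ ∈ ℝ^n with p^T ũ = 1, λ̃ ∈ ℝ, B = [[M − λ̃I, −ũ],[p^T, 0]], C ∈ ℝ^{(n+1)×(n+1)}, σ = ‖I_{n+1} − CB‖_∞, τ = ‖C‖_∞, and η = ‖C·[Mũ − λ̃ũ; 0]‖_∞. If σ < 1 and Δ = (1−σ)² − 4ητ ≥ 0, then β = 2η/(1−σ+√Δ) ≥ 0 and there exists a unique eigenpair (x*, λ*) of M with p^T x* = 1, |λ* − λ̃| ≤ β and ‖x* − ũ‖_∞ ≤ β. -/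
open Matrix

attribute [local instance] Matrix.linftyOpNormedRing

namespace MayerAux

variable {n : ℕ}

def xp (z : (Fin n ⊕ Unit) → ℝ) : Fin n → ℝ := fun i => z (Sum.inl i)

def mu (z : (Fin n ⊕ Unit) → ℝ) : ℝ := z (Sum.inr ())

def Fm (M : Matrix (Fin n) (Fin n) ℝ) (lamt : ℝ) (ut p : Fin n → ℝ)
    (z : (Fin n ⊕ Unit) → ℝ) : (Fin n ⊕ Unit) → ℝ :=
  Sum.elim (M *ᵥ (ut + xp z) - (lamt + mu z) • (ut + xp z))
    (fun _ => p ⬝ᵥ (ut + xp z) - 1)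

def rr (z : (Fin n ⊕ Unit) → ℝ) : (Fin n ⊕ Unit) → ℝ :=
  Sum.elim (-(mu z • xp z)) (fun _ => 0)

def Gm (M : Matrix (Fin n) (Fin n) ℝ) (lamt : ℝ) (ut p : Fin n → ℝ)
    (C : Matrix (Fin n ⊕ Unit) (Fin n ⊕ Unit) ℝ)
    (z : (Fin n ⊕ Unit) → ℝ) : (Fin n ⊕ Unit) → ℝ :=
  z - C *ᵥ (Fm M lamt ut p z)

def tseq (η σ τ : ℝ) : ℕ → ℝ
  | 0 => 0
  | k+1 => η + σ * tseq η σ τ k + τ * (tseq η σ τ k) ^ 2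

def zseq {V : Type*} [Zero V] (G : V → V) : ℕ → V
  | 0 => 0
  | k+1 => G (zseq G k)

lemma norm_xp_le (z : (Fin n ⊕ Unit) → ℝ) : ‖xp z‖ ≤ ‖z‖ := by
  rw [pi_norm_le_iff_of_nonneg (norm_nonneg z)]
  intro i; exact norm_le_pi_norm z (Sum.inl i)

lemma xp_zero {n : ℕ} : xp (0 : (Fin n ⊕ Unit) → ℝ) = 0 := rfl

lemma mu_zero {n : ℕ} : mu (0 : (Fin n ⊕ Unit) → ℝ) = 0 := rfl

lemma abs_mu_le (z : (Fin n ⊕ Unit) → ℝ) : |mu z| ≤ ‖z‖ := by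
  simpa [mu] using norm_le_pi_norm z (Sum.inr ())

end MayerAux

set_option maxHeartbeats 4000000 in
open MayerAux in
/-- Mayer-type verified error bound for an approximate eigenpair: with
`B = [[M - λ̃I, -ũ],[pᵀ, 0]]`, `C` an approximate inverse of `B`, `σ = ‖I - CB‖∞ < 1`,
`τ = ‖C‖∞`, `η = ‖C·[Mũ - λ̃ũ; 0]‖∞` and `Δ = (1-σ)² - 4ητ ≥ 0`, the quantity
`β = 2η/(1-σ+√Δ)` is nonnegative and there is a unique eigenpair `(x*, λ*)` of `M` with
`pᵀx* = 1`, `|λ* - λ̃| ≤ β` and `‖x* - ũ‖∞ ≤ β`. -/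
theorem mayer_eigenpair_error_bound
    (n : ℕ) (M : Matrix (Fin n) (Fin n) ℝ) (lamt : ℝ) (ut p : Fin n → ℝ)
    (hput : p ⬝ᵥ ut = 1)
    (B C : Matrix (Fin n ⊕ Unit) (Fin n ⊕ Unit) ℝ)
    (hB : B = Matrix.fromBlocks (M - lamt • (1 : Matrix (Fin n) (Fin n) ℝ))
      (Matrix.of fun i (_ : Unit) => -ut i)
      (Matrix.of fun (_ : Unit) j => p j)
      (0 : Matrix Unit Unit ℝ))
    (σ τ η Δ β : ℝ)
    (hσ : σ = ‖(1 : Matrix (Fin n ⊕ Unit) (Fin n ⊕ Unit) ℝ) - C * B‖)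
    (hτ : τ = ‖C‖)
    (hη : η = ‖C.mulVec (Sum.elim (M.mulVec ut - lamt • ut) (fun _ : Unit => 0))‖)
    (hσlt : σ < 1)
    (hΔ : Δ = (1 - σ) ^ 2 - 4 * η * τ) (hΔ0 : 0 ≤ Δ)
    (hβ : β = 2 * η / (1 - σ + Real.sqrt Δ)) :
    0 ≤ β ∧
    ∃! xl : (Fin n → ℝ) × ℝ,
      M.mulVec xl.1 = xl.2 • xl.1 ∧ p ⬝ᵥ xl.1 = 1 ∧
        |xl.2 - lamt| ≤ β ∧ ‖xl.1 - ut‖ ≤ β := by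
  classical
  -- scalar preliminaries
  set s : ℝ := Real.sqrt Δ with hs
  have hs0 : 0 ≤ s := Real.sqrt_nonneg _
  have hss : s ^ 2 = Δ := Real.sq_sqrt hΔ0
  have hσ0 : 0 ≤ σ := hσ ▸ norm_nonneg _
  have hτ0 : 0 ≤ τ := hτ ▸ norm_nonneg _
  have hη0 : 0 ≤ η := hη ▸ norm_nonneg _
  have hD : (0:ℝ) < 1 - σ + s := by linarith
  have hβ0 : 0 ≤ β := by rw [hβ]; positivity
  have hβη : β * (1 - σ + s) = 2 * η := by
    rw [hβ]; exact div_mul_cancel₀ _ (ne_of_gt hD)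
  have hkey : 2 * τ * β = 1 - σ - s := by
    have h4 : 4 * τ * η = (1 - σ - s) * (1 - σ + s) := by linear_combination hss + hΔ
    have h5 : (2 * τ * β) * (1 - σ + s) = (1 - σ - s) * (1 - σ + s) := by
      calc (2 * τ * β) * (1 - σ + s) = 2 * τ * (β * (1 - σ + s)) := by ring
        _ = 2 * τ * (2 * η) := by rw [hβη]
        _ = 4 * τ * η := by ring
        _ = (1 - σ - s) * (1 - σ + s) := h4
    exact mul_right_cancel₀ (ne_of_gt hD) h5
  have hroot : η + σ * β + τ * β ^ 2 = β := by
    linear_combination (-1/2 : ℝ) * hβη + (β/2) * hkey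
  have hmono : ∀ a b : ℝ, 0 ≤ a → a ≤ b →
      η + σ * a + τ * a ^ 2 ≤ η + σ * b + τ * b ^ 2 := by
    intro a b ha hab
    nlinarith [mul_le_mul_of_nonneg_left hab hσ0, mul_le_mul_of_nonneg_left
      (mul_self_le_mul_self ha hab) hτ0, sq_nonneg a, sq_nonneg b]
  set F0 : (Fin n ⊕ Unit) → ℝ := Sum.elim (M *ᵥ ut - lamt • ut) (fun _ : Unit => 0)
    with hF0
  -- block decomposition of B *ᵥ z
  have hBz : ∀ z : (Fin n ⊕ Unit) → ℝ, B *ᵥ z =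
      Sum.elim (M *ᵥ xp z - lamt • xp z - mu z • ut) (fun _ => p ⬝ᵥ xp z) := by
    intro z
    have h1 : (M - lamt • (1 : Matrix (Fin n) (Fin n) ℝ)) *ᵥ (z ∘ Sum.inl)
        = M *ᵥ xp z - lamt • xp z := by
      rw [Matrix.sub_mulVec, Matrix.smul_mulVec, Matrix.one_mulVec]; rfl
    have h2 : (Matrix.of fun i (_ : Unit) => -ut i) *ᵥ (z ∘ Sum.inr)
        = -(mu z • ut) := by
      funext i
      simp [Matrix.mulVec, dotProduct, mu]
      ring
    have h3 : (Matrix.of fun (_ : Unit) j => p j) *ᵥ (z ∘ Sum.inl)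
        = fun _ : Unit => p ⬝ᵥ xp z := by
      funext u
      simp [Matrix.mulVec, dotProduct, xp]
    rw [hB, Matrix.fromBlocks_mulVec, h1, h2, h3, Matrix.zero_mulVec]
    funext j
    rcases j with j | u <;> simp [sub_eq_add_neg]
  -- decomposition of F
  have hdecomp : ∀ z : (Fin n ⊕ Unit) → ℝ,
      Fm M lamt ut p z = F0 + B *ᵥ z + rr z := by
    intro z
    funext j
    rcases j with j | u
    · simp only [Fm, Sum.elim_inl, Pi.add_apply, hBz, rr, hF0,
        Matrix.mulVec_add, Pi.sub_apply, Pi.smul_apply, Pi.neg_apply, smul_eq_mul]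
      ring
    · simp only [Fm, Sum.elim_inr, Pi.add_apply, hBz, rr, hF0,
        dotProduct_add, hput, Pi.sub_apply, Pi.smul_apply, Pi.neg_apply]
      ring
  -- difference formula for G
  have hGdiff : ∀ z z' : (Fin n ⊕ Unit) → ℝ,
      Gm M lamt ut p C z - Gm M lamt ut p C z' =
      ((1 : Matrix (Fin n ⊕ Unit) (Fin n ⊕ Unit) ℝ) - C * B) *ᵥ (z - z')
        - C *ᵥ (rr z - rr z') := by
    intro z z'
    simp only [Gm, hdecomp z, hdecomp z', Matrix.sub_mulVec, Matrix.one_mulVec,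
      ← Matrix.mulVec_mulVec, Matrix.mulVec_sub, Matrix.mulVec_add]
    abel
  -- norm estimate for the difference
  have hGlip : ∀ z z' : (Fin n ⊕ Unit) → ℝ,
      ‖Gm M lamt ut p C z - Gm M lamt ut p C z'‖ ≤
        σ * ‖z - z'‖ + τ * ‖rr z - rr z'‖ := by
    intro z z'
    rw [hGdiff]
    calc ‖_ - _‖ ≤ ‖((1 : Matrix (Fin n ⊕ Unit) (Fin n ⊕ Unit) ℝ) - C * B) *ᵥ (z - z')‖
        + ‖C *ᵥ (rr z - rr z')‖ := norm_sub_le _ _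
      _ ≤ ‖(1 : Matrix (Fin n ⊕ Unit) (Fin n ⊕ Unit) ℝ) - C * B‖ * ‖z - z'‖
          + ‖C‖ * ‖rr z - rr z'‖ :=
        add_le_add (Matrix.linfty_opNorm_mulVec _ _) (Matrix.linfty_opNorm_mulVec _ _)
      _ = σ * ‖z - z'‖ + τ * ‖rr z - rr z'‖ := by rw [← hσ, ← hτ]
  -- bound on the remainder difference
  have hrrb : ∀ z z' : (Fin n ⊕ Unit) → ℝ, ‖rr z - rr z'‖ ≤
      |mu z + mu z'| / 2 * ‖z - z'‖ + ‖xp z + xp z'‖ / 2 * |mu z - mu z'| := by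
    intro z z'
    have hb : (0:ℝ) ≤ |mu z + mu z'| / 2 * ‖z - z'‖ + ‖xp z + xp z'‖ / 2 * |mu z - mu z'| := by
      positivity
    rw [pi_norm_le_iff_of_nonneg hb]
    rintro (i | u)
    · have e1 : (rr z - rr z') (Sum.inl i) =
          -((mu z + mu z') / 2 * ((z - z') (Sum.inl i))
            + (mu z - mu z') / 2 * (xp z i + xp z' i)) := by
        show rr z (Sum.inl i) - rr z' (Sum.inl i) = _
        show -(mu z • xp z) i - -(mu z' • xp z') i = _
        show -(mu z * xp z i) - -(mu z' * xp z' i) = _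
        have : (z - z') (Sum.inl i) = xp z i - xp z' i := rfl
        rw [this]; ring
      rw [Real.norm_eq_abs, e1, abs_neg]
      have b1 : |(z - z') (Sum.inl i)| ≤ ‖z - z'‖ := by
        simpa using norm_le_pi_norm (z - z') (Sum.inl i)
      have b2 : |xp z i + xp z' i| ≤ ‖xp z + xp z'‖ := by
        simpa using norm_le_pi_norm (xp z + xp z') i
      have h := abs_add_le ((mu z + mu z') / 2 * ((z - z') (Sum.inl i)))
        ((mu z - mu z') / 2 * (xp z i + xp z' i))
      rw [abs_mul, abs_mul] at h
      have e2 : |(mu z + mu z') / 2| = |mu z + mu z'| / 2 := by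
        rw [abs_div]; norm_num
      have e3 : |(mu z - mu z') / 2| = |mu z - mu z'| / 2 := by
        rw [abs_div]; norm_num
      rw [e2, e3] at h
      refine h.trans ?_
      have n1 : (0:ℝ) ≤ |mu z + mu z'| / 2 := by positivity
      have n2 : (0:ℝ) ≤ |mu z - mu z'| / 2 := by positivity
      have t1 := mul_le_mul_of_nonneg_left b1 n1
      have t2 := mul_le_mul_of_nonneg_left b2 n2
      linarith [t1, t2]
    · have : (rr z - rr z') (Sum.inr u) = 0 := by
        show rr z (Sum.inr u) - rr z' (Sum.inr u) = 0
        simp [rr]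
      rw [Real.norm_eq_abs, this, abs_zero]
      exact hb
  -- averaged Lipschitz bound
  have hGz : ∀ (z z' : (Fin n ⊕ Unit) → ℝ) (b b' : ℝ), ‖z‖ ≤ b → ‖z'‖ ≤ b' →
      ‖Gm M lamt ut p C z - Gm M lamt ut p C z'‖ ≤ (σ + τ * (b + b')) * ‖z - z'‖ := by
    intro z z' b b' hb hb'
    have hd0 : (0:ℝ) ≤ ‖z - z'‖ := norm_nonneg _
    have hmd : |mu z - mu z'| ≤ ‖z - z'‖ := by
      simpa [mu] using norm_le_pi_norm (z - z') (Sum.inr ())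
    have hA : |mu z + mu z'| ≤ b + b' :=
      (abs_add_le _ _).trans (add_le_add ((abs_mu_le z).trans hb) ((abs_mu_le z').trans hb'))
    have hX : ‖xp z + xp z'‖ ≤ b + b' :=
      (norm_add_le _ _).trans (add_le_add ((norm_xp_le z).trans hb) ((norm_xp_le z').trans hb'))
    have hb0 : (0:ℝ) ≤ b := le_trans (norm_nonneg z) hb
    have hb0' : (0:ℝ) ≤ b' := le_trans (norm_nonneg z') hb'
    have step : ‖rr z - rr z'‖ ≤ (b + b') * ‖z - z'‖ := by
      refine (hrrb z z').trans ?_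
      have t1 : |mu z + mu z'| / 2 * ‖z - z'‖ ≤ (b + b') / 2 * ‖z - z'‖ := by gcongr
      have t2 : ‖xp z + xp z'‖ / 2 * |mu z - mu z'| ≤ (b + b') / 2 * ‖z - z'‖ := by
        apply mul_le_mul (by linarith) hmd (abs_nonneg _) (by linarith)
      linarith
    calc ‖Gm M lamt ut p C z - Gm M lamt ut p C z'‖
        ≤ σ * ‖z - z'‖ + τ * ‖rr z - rr z'‖ := hGlip z z'
      _ ≤ σ * ‖z - z'‖ + τ * ((b + b') * ‖z - z'‖) := by
          have := mul_le_mul_of_nonneg_left step hτ0; linarith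
      _ = (σ + τ * (b + b')) * ‖z - z'‖ := by ring
  -- value at 0
  have hF00 : Fm M lamt ut p 0 = F0 := by
    funext j
    rcases j with j | u
    · simp [Fm, hF0, xp_zero, mu_zero]
    · simp [Fm, hF0, xp_zero, mu_zero, hput]
  have hG0 : ‖Gm M lamt ut p C 0‖ = η := by
    show ‖(0 : (Fin n ⊕ Unit) → ℝ) - C *ᵥ (Fm M lamt ut p 0)‖ = η
    rw [hF00, zero_sub, norm_neg, hη]
  -- the iteration sequences
  set t : ℕ → ℝ := tseq η σ τ with ht
  set zs : ℕ → (Fin n ⊕ Unit) → ℝ := zseq (Gm M lamt ut p C) with hzs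
  have hts : ∀ k, t (k+1) = η + σ * t k + τ * (t k) ^ 2 := fun k => rfl
  have ht0 : t 0 = 0 := rfl
  have hzs0 : zs 0 = 0 := rfl
  have hzss : ∀ k, zs (k+1) = Gm M lamt ut p C (zs k) := fun k => rfl
  have htfacts : ∀ k, 0 ≤ t k ∧ t k ≤ t (k+1) ∧ t k ≤ β := by
    intro k
    induction k with
    | zero =>
      refine ⟨le_refl _, ?_, hβ0⟩
      rw [ht0, hts 0, ht0]; nlinarith
    | succ k ih =>
      obtain ⟨h0, hle, hkβ⟩ := ih
      have h0' : 0 ≤ t (k+1) := le_trans h0 hle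
      have hk1β : t (k+1) ≤ β := by
        rw [hts k, ← hroot]
        exact hmono (t k) β h0 hkβ
      refine ⟨h0', ?_, hk1β⟩
      rw [hts k, hts (k+1)]
      exact hmono (t k) (t (k+1)) h0 hle
  have hzfacts : ∀ k, ‖zs k‖ ≤ t k ∧ ‖zs (k+1) - zs k‖ ≤ t (k+1) - t k := by
    intro k
    induction k with
    | zero =>
      constructor
      · rw [hzs0, ht0, norm_zero]
      · rw [hzs0, ht0, hts 0, ht0, sub_zero, hzss 0, hzs0, sub_zero, hG0]
        nlinarith [hη0]
    | succ k ih =>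
      obtain ⟨hk, hd⟩ := ih
      have hk1 : ‖zs (k+1)‖ ≤ t (k+1) := by
        have : ‖zs (k+1)‖ ≤ ‖zs k‖ + ‖zs (k+1) - zs k‖ := by
          have := norm_add_le (zs k) (zs (k+1) - zs k)
          simpa using this
        linarith
      refine ⟨hk1, ?_⟩
      have hfac0 : (0:ℝ) ≤ σ + τ * (t (k+1) + t k) := by
        have := (htfacts k).1
        have := (htfacts (k+1)).1
        positivity
      calc ‖zs (k+1+1) - zs (k+1)‖
          = ‖Gm M lamt ut p C (zs (k+1)) - Gm M lamt ut p C (zs k)‖ := by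
            rw [hzss (k+1), hzss k]
        _ ≤ (σ + τ * (t (k+1) + t k)) * ‖zs (k+1) - zs k‖ :=
            hGz _ _ _ _ hk1 hk
        _ ≤ (σ + τ * (t (k+1) + t k)) * (t (k+1) - t k) :=
            mul_le_mul_of_nonneg_left hd hfac0
        _ = t (k+1+1) - t (k+1) := by rw [hts (k+1), hts k]; ring
  have hzβ : ∀ k, ‖zs k‖ ≤ β := fun k => (hzfacts k).1.trans (htfacts k).2.2
  have hdist : ∀ k m, k ≤ m → ‖zs m - zs k‖ ≤ t m - t k := by
    intro k m hkm
    induction m, hkm using Nat.le_induction with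
    | base => simp
    | succ m hkm ih =>
      have h1 := (hzfacts m).2
      calc ‖zs (m+1) - zs k‖ = ‖(zs (m+1) - zs m) + (zs m - zs k)‖ := by abel_nf
        _ ≤ ‖zs (m+1) - zs m‖ + ‖zs m - zs k‖ := norm_add_le _ _
        _ ≤ (t (m+1) - t m) + (t m - t k) := add_le_add h1 ih
        _ = t (m+1) - t k := by ring
  -- convergence
  have htmono : Monotone t := monotone_nat_of_le_succ (fun k => (htfacts k).2.1)
  have htbdd : BddAbove (Set.range t) := ⟨β, by rintro x ⟨k, rfl⟩; exact (htfacts k).2.2⟩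
  set L : ℝ := ⨆ k, t k with hL
  have htL : Filter.Tendsto t Filter.atTop (nhds L) := tendsto_atTop_ciSup htmono htbdd
  have htkL : ∀ k, t k ≤ L := fun k => le_ciSup htbdd k
  have hcauchy : CauchySeq zs := by
    apply cauchySeq_of_le_tendsto_0 (fun N => L - t N)
    · intro a b N ha hb
      rcases le_total a b with hab | hab
      · rw [dist_eq_norm, norm_sub_rev]
        calc ‖zs b - zs a‖ ≤ t b - t a := hdist a b hab
          _ ≤ L - t N := by
            have := htkL b
            have := htmono ha
            linarith
      · rw [dist_eq_norm]
        calc ‖zs a - zs b‖ ≤ t a - t b := hdist b a hab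
          _ ≤ L - t N := by
            have := htkL a
            have := htmono hb
            linarith
    · have : Filter.Tendsto (fun N => L - t N) Filter.atTop (nhds (L - L)) :=
        Filter.Tendsto.sub tendsto_const_nhds htL
      simpa using this
  obtain ⟨zl, hzl⟩ := cauchySeq_tendsto_of_complete hcauchy
  have hzlβ : ‖zl‖ ≤ β := by
    have h1 : Filter.Tendsto (fun k => ‖zs k‖) Filter.atTop (nhds ‖zl‖) := hzl.norm
    exact le_of_tendsto h1 (Filter.Eventually.of_forall hzβ)
  -- fixed point
  have hfixzl : Gm M lamt ut p C zl = zl := by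
    have h1 : Filter.Tendsto (fun k => zs (k+1)) Filter.atTop (nhds zl) :=
      hzl.comp (Filter.tendsto_add_atTop_nat 1)
    have h2 : Filter.Tendsto (fun k => Gm M lamt ut p C (zs k)) Filter.atTop
        (nhds (Gm M lamt ut p C zl)) := by
      rw [tendsto_iff_norm_sub_tendsto_zero]
      have hb : ∀ k, ‖Gm M lamt ut p C (zs k) - Gm M lamt ut p C zl‖ ≤
          (σ + τ * (β + β)) * ‖zs k - zl‖ := fun k => hGz _ _ _ _ (hzβ k) hzlβ
      have h3 : Filter.Tendsto (fun k => (σ + τ * (β + β)) * ‖zs k - zl‖)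
          Filter.atTop (nhds 0) := by
        have h4 : Filter.Tendsto (fun k => ‖zs k - zl‖) Filter.atTop (nhds 0) :=
          tendsto_iff_norm_sub_tendsto_zero.mp hzl
        have := h4.const_mul (σ + τ * (β + β))
        simpa using this
      exact squeeze_zero (fun k => norm_nonneg _) hb h3
    have h2' : Filter.Tendsto (fun k => zs (k+1)) Filter.atTop
        (nhds (Gm M lamt ut p C zl)) := h2
    exact tendsto_nhds_unique h2' h1
  have hCF : C *ᵥ (Fm M lamt ut p zl) = 0 := by
    have h := hfixzl
    rw [Gm] at h
    rwa [sub_eq_self] at h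
  -- invertibility and zero of F
  have hCB : IsUnit (C * B) := by
    haveI : @CompleteSpace (Matrix (Fin n ⊕ Unit) (Fin n ⊕ Unit) ℝ) PseudoMetricSpace.toUniformSpace :=
      (inferInstance : CompleteSpace (Matrix (Fin n ⊕ Unit) (Fin n ⊕ Unit) ℝ))
    have h := isUnit_one_sub_of_norm_lt_one
      (x := (1 : Matrix (Fin n ⊕ Unit) (Fin n ⊕ Unit) ℝ) - C * B) (by rw [← hσ]; exact hσlt)
    simpa using h
  have hdet : IsUnit (C * B).det := (Matrix.isUnit_iff_isUnit_det _).mp hCB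
  have hinv : (C * B) * (C * B)⁻¹ = 1 := Matrix.mul_nonsing_inv _ hdet
  have hCright : C * (B * (C * B)⁻¹) = 1 := by rw [← Matrix.mul_assoc]; exact hinv
  have hCleft : (B * (C * B)⁻¹) * C = 1 := mul_eq_one_comm.mp hCright
  have hFzl : Fm M lamt ut p zl = 0 := by
    have h : (B * (C * B)⁻¹) *ᵥ (C *ᵥ (Fm M lamt ut p zl)) = Fm M lamt ut p zl := by
      rw [Matrix.mulVec_mulVec, hCleft, Matrix.one_mulVec]
    rw [hCF, Matrix.mulVec_zero] at h
    exact h.symm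
  -- the eigenpair
  have htop : M *ᵥ (ut + xp zl) = (lamt + mu zl) • (ut + xp zl) := by
    apply sub_eq_zero.mp
    funext i
    have h := congrFun hFzl (Sum.inl i)
    simpa [Fm] using h
  have hbot : p ⬝ᵥ (ut + xp zl) = 1 := by
    have h := congrFun hFzl (Sum.inr ())
    have h' : p ⬝ᵥ (ut + xp zl) - 1 = 0 := h
    linarith
  -- uniqueness of fixed points in the ball
  have huniq : ∀ w w' : (Fin n ⊕ Unit) → ℝ, ‖w‖ ≤ β → ‖w'‖ ≤ β →
      Gm M lamt ut p C w = w → Gm M lamt ut p C w' = w' → w = w' := by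
    intro w w' hw hw' hfw hfw'
    by_contra hne
    have hd0 : 0 < ‖w - w'‖ := by
      rw [norm_pos_iff]
      exact sub_ne_zero.mpr hne
    have hGd : ‖w - w'‖ ≤ σ * ‖w - w'‖ + τ * ‖rr w - rr w'‖ := by
      have h := hGlip w w'
      rwa [hfw, hfw'] at h
    have hq := hrrb w w'
    have hmd : |mu w - mu w'| ≤ ‖w - w'‖ := by
      simpa [mu] using norm_le_pi_norm (w - w') (Sum.inr ())
    have hA : |mu w + mu w'| ≤ 2 * β :=
      (abs_add_le _ _).trans (by linarith [(abs_mu_le w).trans hw, (abs_mu_le w').trans hw'])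
    have hX : ‖xp w + xp w'‖ ≤ 2 * β :=
      (norm_add_le _ _).trans (by linarith [(norm_xp_le w).trans hw, (norm_xp_le w').trans hw'])
    -- first, 1 ≤ σ + τ * ((A + X)/2)
    have h1 : 1 ≤ σ + τ * ((|mu w + mu w'| + ‖xp w + xp w'‖) / 2) := by
      have step : ‖w - w'‖ ≤ (σ + τ * ((|mu w + mu w'| + ‖xp w + xp w'‖) / 2)) * ‖w - w'‖ := by
        have t2 : ‖xp w + xp w'‖ / 2 * |mu w - mu w'| ≤ ‖xp w + xp w'‖ / 2 * ‖w - w'‖ :=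
          mul_le_mul_of_nonneg_left hmd (by positivity)
        have t3 : ‖rr w - rr w'‖ ≤ (|mu w + mu w'| + ‖xp w + xp w'‖) / 2 * ‖w - w'‖ := by
          refine hq.trans ?_
          calc |mu w + mu w'| / 2 * ‖w - w'‖ + ‖xp w + xp w'‖ / 2 * |mu w - mu w'|
              ≤ |mu w + mu w'| / 2 * ‖w - w'‖ + ‖xp w + xp w'‖ / 2 * ‖w - w'‖ := by
                linarith only [t2]
            _ = (|mu w + mu w'| + ‖xp w + xp w'‖) / 2 * ‖w - w'‖ := by ring
        have t4 := mul_le_mul_of_nonneg_left t3 hτ0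
        calc ‖w - w'‖ ≤ σ * ‖w - w'‖ + τ * ‖rr w - rr w'‖ := hGd
          _ ≤ σ * ‖w - w'‖ + τ * ((|mu w + mu w'| + ‖xp w + xp w'‖) / 2 * ‖w - w'‖) := by
              linarith only [t4]
          _ = (σ + τ * ((|mu w + mu w'| + ‖xp w + xp w'‖) / 2)) * ‖w - w'‖ := by ring
      have step' : 1 * ‖w - w'‖ ≤
          (σ + τ * ((|mu w + mu w'| + ‖xp w + xp w'‖) / 2)) * ‖w - w'‖ := by
        rw [one_mul]; exact step
      exact le_of_mul_le_mul_right step' hd0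
    have h2 : σ + τ * ((|mu w + mu w'| + ‖xp w + xp w'‖) / 2) ≤ 1 - s := by
      have t5 : τ * ((|mu w + mu w'| + ‖xp w + xp w'‖) / 2) ≤ τ * (2 * β) := by
        apply mul_le_mul_of_nonneg_left _ hτ0
        linarith only [hA, hX]
      linarith only [hkey, t5]
    have hseq : s = 0 := le_antisymm (by linarith only [h1, h2]) hs0
    have hτpos : 0 < τ := by
      rcases lt_or_eq_of_le hτ0 with h | h
      · exact h
      · exfalso
        rw [← h] at hkey
        rw [hseq] at hkey
        simp at hkey
        linarith only [hσlt, hkey]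
    have hβpos : 0 < β := by
      rcases eq_or_lt_of_le hβ0 with h | h
      · exfalso
        rw [hseq, ← h] at hkey
        simp at hkey
        linarith only [hσlt, hkey]
      · exact h
    -- A = 2β
    rw [hseq] at hkey
    have h3 : τ * (2 * β) ≤ τ * ((|mu w + mu w'| + ‖xp w + xp w'‖) / 2) := by
      linarith only [h1, hkey]
    have h4 : 2 * β ≤ (|mu w + mu w'| + ‖xp w + xp w'‖) / 2 :=
      le_of_mul_le_mul_left h3 hτpos
    have hAeq : |mu w + mu w'| = 2 * β := le_antisymm hA (by linarith only [h4, hX])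
    -- equal mu's
    have hmw : |mu w| ≤ β := (abs_mu_le w).trans hw
    have hmw' : |mu w'| ≤ β := (abs_mu_le w').trans hw'
    have hμeq : mu w = mu w' := by
      obtain ⟨u1, u2⟩ := abs_le.mp hmw
      obtain ⟨v1, v2⟩ := abs_le.mp hmw'
      have q3 : (mu w + mu w') ^ 2 = 4 * β ^ 2 := by
        have hsq := sq_abs (mu w + mu w')
        rw [hAeq] at hsq
        nlinarith only [hsq]
      have h5 : (mu w - mu w') ^ 2 ≤ 0 := by nlinarith only [q3, u1, u2, v1, v2]
      have h6 : (mu w - mu w') ^ 2 = 0 := le_antisymm h5 (sq_nonneg _)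
      have h7 := pow_eq_zero_iff (n := 2) (by norm_num) |>.mp h6
      linarith only [h7]
    -- refined bound gives contradiction
    have hz0 : |mu w - mu w'| = 0 := by rw [hμeq, sub_self, abs_zero]
    have h7 : ‖rr w - rr w'‖ ≤ β * ‖w - w'‖ := by
      have h := hq
      rw [hz0, mul_zero, add_zero, hAeq] at h
      calc ‖rr w - rr w'‖ ≤ 2 * β / 2 * ‖w - w'‖ := h
        _ = β * ‖w - w'‖ := by ring
    have h8 : ‖w - w'‖ ≤ (σ + τ * β) * ‖w - w'‖ := by
      have t6 := mul_le_mul_of_nonneg_left h7 hτ0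
      calc ‖w - w'‖ ≤ σ * ‖w - w'‖ + τ * ‖rr w - rr w'‖ := hGd
        _ ≤ σ * ‖w - w'‖ + τ * (β * ‖w - w'‖) := by linarith only [hGd, t6]
        _ = (σ + τ * β) * ‖w - w'‖ := by ring
    have t7 : (2 * τ * β) * ‖w - w'‖ = (1 - σ) * ‖w - w'‖ := by rw [hkey]; ring
    linarith only [h8, t7, mul_pos (mul_pos hτpos hβpos) hd0]
  -- assemble the result
  refine ⟨hβ0, ⟨(ut + xp zl, lamt + mu zl), ⟨htop, hbot, ?_, ?_⟩, ?_⟩⟩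
  · show |lamt + mu zl - lamt| ≤ β
    rw [add_sub_cancel_left]
    exact (abs_mu_le zl).trans hzlβ
  · show ‖ut + xp zl - ut‖ ≤ β
    rw [add_sub_cancel_left]
    exact (norm_xp_le zl).trans hzlβ
  · rintro ⟨x, l⟩ ⟨heq, hpx, hlb, hxb⟩
    set w : (Fin n ⊕ Unit) → ℝ := Sum.elim (x - ut) (fun _ : Unit => l - lamt) with hw
    have hxpw : xp w = x - ut := rfl
    have hmuw : mu w = l - lamt := rfl
    have hwb : ‖w‖ ≤ β := by
      rw [pi_norm_le_iff_of_nonneg hβ0]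
      rintro (i | u)
      · show ‖(x - ut) i‖ ≤ β
        exact (norm_le_pi_norm (x - ut) i).trans hxb
      · show ‖l - lamt‖ ≤ β
        rwa [Real.norm_eq_abs]
    have hutx : ut + xp w = x := by
      rw [hxpw]; abel
    have hFw : Fm M lamt ut p w = 0 := by
      funext j
      rcases j with j | u
      · show (M *ᵥ (ut + xp w) - (lamt + mu w) • (ut + xp w)) j = 0
        rw [hutx, hmuw]
        have : lamt + (l - lamt) = l := by ring
        rw [this, heq]
        simp
      · show p ⬝ᵥ (ut + xp w) - 1 = 0
        rw [hutx, hpx, sub_self]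
    have hGw : Gm M lamt ut p C w = w := by
      rw [Gm, hFw, Matrix.mulVec_zero, sub_zero]
    have hweq : w = zl := huniq w zl hwb hzlβ hGw hfixzl
    have hx : x = ut + xp zl := by rw [← hweq, hxpw]; abel
    have hl : l = lamt + mu zl := by rw [← hweq, hmuw]; ring
    rw [Prod.mk.injEq]
    exact ⟨hx, hl⟩
end
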